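/- Let n ≥ 2 be an integer, n′ = n/(n−1), let φ : [0,∞) → [0,∞) be quasiconcave, and let γ, ℓ > 0. Let g : (0,∞) → [0,∞) be nonincreasing and locally integrable, and set G(s) = (1/s) ∫₀^s g(r) dr. Then sup_{s∈(0, γ ℓ^{1/n′})} G(s) φ(γ^{−n′} s^{n′}) ≤ sup_{s∈(0, ℓ)} (φ(s)/s) ∫₀^s G(γ r^{1/n′}) dr ≤ n · sup_{s∈(0, γ ℓ^{1/n′})} G(s) φ(γ^{−n′} s^{n′}). -/

import Mathlib

open MeasureTheory Set Filter
open scoped ENNReal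

/-- The level average `G(s) = (1/s) ∫₀^s g(r) dr`. -/
noncomputable def levelAvg (g : ℝ → ℝ≥0∞) (s : ℝ) : ℝ≥0∞ :=
  (∫⁻ r in Set.Ioc (0:ℝ) s, g r) / ENNReal.ofReal s

/-- `φ : [0,∞) → [0,∞)` is quasiconcave: increasing, vanishing only at `0`, and with
`φ(s)/s` decreasing on `(0,∞)`. -/
structure Quasiconcave (φ : ℝ → ℝ) : Prop where
  zero : φ 0 = 0
  pos : ∀ s > (0:ℝ), 0 < φ s
  mono : MonotoneOn φ (Set.Ici 0)
  ratio_anti : AntitoneOn (fun s => φ s / s) (Set.Ioi 0)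

lemma mne_levelAvg_mul (g : ℝ → ℝ≥0∞) {a : ℝ} (ha : 0 < a) :
    levelAvg g a * ENNReal.ofReal a = ∫⁻ r in Set.Ioc (0:ℝ) a, g r :=
  ENNReal.div_mul_cancel (ENNReal.ofReal_pos.mpr ha).ne' ENNReal.ofReal_ne_top

lemma mne_levelAvg_scaled_mono (g : ℝ → ℝ≥0∞) {a b : ℝ} (ha : 0 < a) (hab : a ≤ b) :
    levelAvg g a * ENNReal.ofReal a ≤ levelAvg g b * ENNReal.ofReal b := by
  rw [mne_levelAvg_mul g ha, mne_levelAvg_mul g (ha.trans_le hab)]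
  exact lintegral_mono_set (Set.Ioc_subset_Ioc_right hab)

lemma mne_levelAvg_anti (g : ℝ → ℝ≥0∞) (hg : AntitoneOn g (Set.Ioi 0))
    {a b : ℝ} (ha : 0 < a) (hab : a ≤ b) :
    levelAvg g b ≤ levelAvg g a := by
  have hb : 0 < b := ha.trans_le hab
  have key : ∀ r ∈ Set.Ioc a b, g r ≤ levelAvg g a := by
    intro r hr
    have hr0 : 0 < r := ha.trans hr.1
    rw [levelAvg, ENNReal.le_div_iff_mul_le
      (Or.inl (ENNReal.ofReal_pos.mpr ha).ne') (Or.inl ENNReal.ofReal_ne_top)]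
    calc g r * ENNReal.ofReal a = ∫⁻ _ in Set.Ioc (0:ℝ) a, g r := by
          rw [setLIntegral_const, Real.volume_Ioc, sub_zero]
      _ ≤ ∫⁻ u in Set.Ioc (0:ℝ) a, g u := by
          refine lintegral_mono_ae ((ae_restrict_iff' measurableSet_Ioc).2 (ae_of_all _ ?_))
          intro u hu
          exact hg hu.1 (Set.mem_Ioi.mpr hr0) (hu.2.trans hr.1.le)
  have split : (∫⁻ r in Set.Ioc (0:ℝ) b, g r)
      = (∫⁻ r in Set.Ioc (0:ℝ) a, g r) + ∫⁻ r in Set.Ioc a b, g r := by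
    rw [← lintegral_union measurableSet_Ioc (Set.Ioc_disjoint_Ioc_of_le le_rfl),
      Set.Ioc_union_Ioc_eq_Ioc ha.le hab]
  have h2 : (∫⁻ r in Set.Ioc a b, g r) ≤ levelAvg g a * ENNReal.ofReal (b - a) := by
    calc (∫⁻ r in Set.Ioc a b, g r) ≤ ∫⁻ _ in Set.Ioc a b, levelAvg g a :=
          lintegral_mono_ae ((ae_restrict_iff' measurableSet_Ioc).2 (ae_of_all _ key))
      _ = levelAvg g a * ENNReal.ofReal (b - a) := by
          rw [setLIntegral_const, Real.volume_Ioc]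
  rw [levelAvg]
  refine ENNReal.div_le_of_le_mul ?_
  rw [split]
  calc (∫⁻ r in Set.Ioc (0:ℝ) a, g r) + ∫⁻ r in Set.Ioc a b, g r
      ≤ levelAvg g a * ENNReal.ofReal a + levelAvg g a * ENNReal.ofReal (b - a) :=
        add_le_add (mne_levelAvg_mul g ha).symm.le h2
    _ = levelAvg g a * ENNReal.ofReal b := by
        rw [← mul_add, ← ENNReal.ofReal_add ha.le (sub_nonneg.2 hab)]
        ring_nf

lemma mne_lintegral_Ioc_rpow {s t : ℝ} (hs : 0 < s) (ht : -1 < t) :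
    (∫⁻ r in Set.Ioc (0:ℝ) s, ENNReal.ofReal (r ^ t)) = ENNReal.ofReal (s ^ (t+1) / (t+1)) := by
  have hOn : MeasureTheory.IntegrableOn (fun r : ℝ => r ^ t) (Set.Ioc 0 s) := by
    rw [← intervalIntegrable_iff_integrableOn_Ioc_of_le hs.le]
    exact intervalIntegral.intervalIntegrable_rpow' ht
  have hnn : 0 ≤ᵐ[volume.restrict (Set.Ioc (0:ℝ) s)] fun r : ℝ => r ^ t :=
    (ae_restrict_iff' measurableSet_Ioc).2
      (ae_of_all _ fun r hr => (Real.rpow_pos_of_pos hr.1 t).le)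
  rw [← MeasureTheory.ofReal_integral_eq_lintegral_ofReal hOn hnn]
  congr 1
  rw [← intervalIntegral.integral_of_le hs.le, integral_rpow (Or.inl ht),
    Real.zero_rpow (by linarith : t + 1 ≠ 0), sub_zero]

theorem marcinkiewicz_norm_equiv
    (n : ℕ) (hn : 2 ≤ n) (φ : ℝ → ℝ) (hφ : Quasiconcave φ)
    (γ ℓ : ℝ) (hγ : 0 < γ) (hℓ : 0 < ℓ)
    (g : ℝ → ℝ≥0∞) (hg : AntitoneOn g (Set.Ioi 0))
    (hloc : ∀ s > (0:ℝ), (∫⁻ r in Set.Ioc (0:ℝ) s, g r) < ⊤) :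
    (⨆ s ∈ Set.Ioo (0:ℝ) (γ * ℓ ^ (((n:ℝ)-1)/n)),
        levelAvg g s * ENNReal.ofReal (φ (γ ^ (-((n:ℝ)/((n:ℝ)-1))) * s ^ ((n:ℝ)/((n:ℝ)-1))))) ≤
      (⨆ s ∈ Set.Ioo (0:ℝ) ℓ,
        ENNReal.ofReal (φ s / s) *
          ∫⁻ r in Set.Ioc (0:ℝ) s, levelAvg g (γ * r ^ (((n:ℝ)-1)/n))) ∧
    (⨆ s ∈ Set.Ioo (0:ℝ) ℓ,
        ENNReal.ofReal (φ s / s) *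
          ∫⁻ r in Set.Ioc (0:ℝ) s, levelAvg g (γ * r ^ (((n:ℝ)-1)/n))) ≤
      (n : ℝ≥0∞) *
        ⨆ s ∈ Set.Ioo (0:ℝ) (γ * ℓ ^ (((n:ℝ)-1)/n)),
          levelAvg g s * ENNReal.ofReal (φ (γ ^ (-((n:ℝ)/((n:ℝ)-1))) * s ^ ((n:ℝ)/((n:ℝ)-1)))) := by
  have hn2 : (2:ℝ) ≤ (n:ℝ) := by exact_mod_cast hn
  have hn1 : (1:ℝ) ≤ (n:ℝ) - 1 := by linarith
  have hn0 : (0:ℝ) < n := by linarith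
  set p : ℝ := ((n:ℝ)-1)/n with hpdef
  set q : ℝ := (n:ℝ)/((n:ℝ)-1) with hqdef
  have hp0 : 0 < p := div_pos (by linarith) hn0
  have hp1 : p < 1 := by rw [hpdef, div_lt_one hn0]; linarith
  have hq0 : 0 < q := div_pos hn0 (by linarith)
  have hpq : p * q = 1 := by
    rw [hpdef, hqdef]; field_simp
  have hqp : q * p = 1 := by rw [mul_comm]; exact hpq
  -- for x > 0 : γ ^ (-q) * (γ * x ^ p) ^ q = x
  have key_alg : ∀ x : ℝ, 0 < x → γ ^ (-q) * (γ * x ^ p) ^ q = x := by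
    intro x hx
    rw [Real.mul_rpow hγ.le (Real.rpow_nonneg hx.le p), ← Real.rpow_mul hx.le, hpq,
      Real.rpow_one, ← mul_assoc, ← Real.rpow_add hγ, neg_add_cancel, Real.rpow_zero, one_mul]
  -- for s > 0 : γ * (γ ^ (-q) * s ^ q) ^ p = s
  have key_alg' : ∀ s : ℝ, 0 < s → γ * (γ ^ (-q) * s ^ q) ^ p = s := by
    intro s hs
    rw [Real.mul_rpow (Real.rpow_nonneg hγ.le _) (Real.rpow_nonneg hs.le _),
      ← Real.rpow_mul hγ.le, ← Real.rpow_mul hs.le, hqp, Real.rpow_one,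
      show -q * p = -1 by rw [neg_mul, hqp], ← mul_assoc, Real.rpow_neg_one]
    field_simp
  constructor
  · refine iSup₂_le fun s hs => ?_
    obtain ⟨hs0, hsub⟩ := hs
    set t : ℝ := γ ^ (-q) * s ^ q with htdef
    have ht0 : 0 < t := mul_pos (Real.rpow_pos_of_pos hγ _) (Real.rpow_pos_of_pos hs0 _)
    have htℓ : t < ℓ := by
      have h3 : t < γ ^ (-q) * (γ * ℓ ^ p) ^ q :=
        mul_lt_mul_of_pos_left (Real.rpow_lt_rpow hs0.le hsub hq0) (Real.rpow_pos_of_pos hγ _)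
      rwa [key_alg ℓ hℓ] at h3
    have hst : γ * t ^ p = s := key_alg' s hs0
    have hφt : 0 < φ t := hφ.pos t ht0
    have hint : ENNReal.ofReal t * levelAvg g s
        ≤ ∫⁻ r in Set.Ioc (0:ℝ) t, levelAvg g (γ * r ^ p) := by
      calc ENNReal.ofReal t * levelAvg g s
          = ∫⁻ _ in Set.Ioc (0:ℝ) t, levelAvg g s := by
            rw [setLIntegral_const, Real.volume_Ioc, sub_zero, mul_comm]
        _ ≤ _ := by
            refine lintegral_mono_ae ((ae_restrict_iff' measurableSet_Ioc).2 (ae_of_all _ ?_))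
            intro r hr
            have hr0 : 0 < r := hr.1
            have h1 : γ * r ^ p ≤ s := by
              rw [← hst]
              exact mul_le_mul_of_nonneg_left (Real.rpow_le_rpow hr0.le hr.2 hp0.le) hγ.le
            exact mne_levelAvg_anti g hg (mul_pos hγ (Real.rpow_pos_of_pos hr0 p)) h1
    refine le_iSup₂_of_le t ⟨ht0, htℓ⟩ ?_
    calc levelAvg g s * ENNReal.ofReal (φ t)
        = ENNReal.ofReal (φ t / t) * (ENNReal.ofReal t * levelAvg g s) := by
          rw [← mul_assoc, ← ENNReal.ofReal_mul (div_nonneg hφt.le ht0.le),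
            div_mul_cancel₀ _ ht0.ne', mul_comm]
      _ ≤ _ := mul_le_mul_right hint _
  · refine iSup₂_le fun s hs => ?_
    obtain ⟨hs0, hsℓ⟩ := hs
    set t : ℝ := γ * s ^ p with htdef
    have ht0 : 0 < t := mul_pos hγ (Real.rpow_pos_of_pos hs0 p)
    have htub : t < γ * ℓ ^ p :=
      mul_lt_mul_of_pos_left (Real.rpow_lt_rpow hs0.le hsℓ hp0) hγ
    have hGt_top : levelAvg g t ≠ ⊤ :=
      (ENNReal.div_lt_top (hloc t ht0).ne (ENNReal.ofReal_pos.mpr ht0).ne').ne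
    have hpt : ∀ r ∈ Set.Ioc (0:ℝ) s, levelAvg g (γ * r ^ p)
        ≤ ENNReal.ofReal (s ^ p) * levelAvg g t * ENNReal.ofReal (r ^ (-p)) := by
      intro r hr
      have hr0 : 0 < r := hr.1
      have hγr : 0 < γ * r ^ p := mul_pos hγ (Real.rpow_pos_of_pos hr0 p)
      have hmono := mne_levelAvg_scaled_mono g hγr
        (mul_le_mul_of_nonneg_left (Real.rpow_le_rpow hr0.le hr.2 hp0.le) hγ.le)
      have h1 : levelAvg g (γ * r ^ p)
          ≤ levelAvg g t * ENNReal.ofReal t / ENNReal.ofReal (γ * r ^ p) :=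
        (ENNReal.le_div_iff_mul_le (Or.inl (ENNReal.ofReal_pos.mpr hγr).ne')
          (Or.inl ENNReal.ofReal_ne_top)).2 hmono
      refine h1.trans (le_of_eq ?_)
      rw [mul_div_assoc, ← ENNReal.ofReal_div_of_pos hγr,
        show t / (γ * r ^ p) = s ^ p * r ^ (-p) by
          rw [htdef, mul_div_mul_left _ _ hγ.ne', Real.rpow_neg hr0.le, div_eq_mul_inv],
        ENNReal.ofReal_mul (Real.rpow_nonneg hs0.le p)]
      ring
    have hrint := mne_lintegral_Ioc_rpow hs0 (by linarith : (-1:ℝ) < -p)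
    have hc_ne_top : ENNReal.ofReal (s ^ p) * levelAvg g t ≠ ⊤ :=
      ENNReal.mul_ne_top ENNReal.ofReal_ne_top hGt_top
    have hreal : s ^ p * (s ^ (-p + 1) / (-p + 1)) = (n:ℝ) * s := by
      have h1 : -p + 1 = 1 / (n:ℝ) := by rw [hpdef]; field_simp; ring
      rw [h1, one_div, div_eq_mul_inv, inv_inv, ← mul_assoc, ← Real.rpow_add hs0,
        show p + ((n:ℝ))⁻¹ = 1 by rw [hpdef]; field_simp; ring, Real.rpow_one, mul_comm]
    have hint : (∫⁻ r in Set.Ioc (0:ℝ) s, levelAvg g (γ * r ^ p))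
        ≤ ENNReal.ofReal ((n:ℝ) * s) * levelAvg g t := by
      calc (∫⁻ r in Set.Ioc (0:ℝ) s, levelAvg g (γ * r ^ p))
          ≤ ∫⁻ r in Set.Ioc (0:ℝ) s,
              ENNReal.ofReal (s ^ p) * levelAvg g t * ENNReal.ofReal (r ^ (-p)) :=
            lintegral_mono_ae ((ae_restrict_iff' measurableSet_Ioc).2 (ae_of_all _ hpt))
        _ = ENNReal.ofReal (s ^ p) * levelAvg g t * ENNReal.ofReal (s ^ (-p + 1) / (-p + 1)) := by
            rw [lintegral_const_mul' _ _ hc_ne_top, hrint]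
        _ = ENNReal.ofReal ((n:ℝ) * s) * levelAvg g t := by
            rw [mul_right_comm, ← ENNReal.ofReal_mul (Real.rpow_nonneg hs0.le p), hreal]
    have hts : γ ^ (-q) * t ^ q = s := key_alg s hs0
    have hφs : 0 < φ s := hφ.pos s hs0
    have hfin : ENNReal.ofReal (φ s / s) * (∫⁻ r in Set.Ioc (0:ℝ) s, levelAvg g (γ * r ^ p))
        ≤ (n : ℝ≥0∞) * (levelAvg g t * ENNReal.ofReal (φ (γ ^ (-q) * t ^ q))) := by
      rw [hts]
      calc ENNReal.ofReal (φ s / s) * (∫⁻ r in Set.Ioc (0:ℝ) s, levelAvg g (γ * r ^ p))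
          ≤ ENNReal.ofReal (φ s / s) * (ENNReal.ofReal ((n:ℝ) * s) * levelAvg g t) :=
            mul_le_mul_right hint _
        _ = (n : ℝ≥0∞) * (levelAvg g t * ENNReal.ofReal (φ s)) := by
            rw [← mul_assoc, ← ENNReal.ofReal_mul (div_nonneg hφs.le hs0.le),
              show φ s / s * ((n:ℝ) * s) = (n:ℝ) * φ s by field_simp,
              ENNReal.ofReal_mul (by positivity : (0:ℝ) ≤ (n:ℝ)), ENNReal.ofReal_natCast]
            ring
    refine hfin.trans (mul_le_mul_right ?_ _)
    exact le_iSup₂_of_le t ⟨ht0, htub⟩ le_rfl
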